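/- Let W_n = S_n/n be the relative number of drawn red balls after n drawings in a Pólya urn with parameters a = r/c and b = w/c, and let Z ~ Beta(a,b). Then for every continuously differentiable function h : [0,1] → ℝ with Lipschitz-continuous derivative h', one has |E[h(W_n)] − E[h(Z)]| ≤ (C(a,b)/n)·‖h'‖·( ab/(a+b) + ((a+b)C(a+1,b+1)/6)·(1 + (a+b−1)/n) ) + (C(a+1,b+1)/(6n))·‖h''‖·(1 + (a+b−1)/n), where ‖h''‖ denotes the minimum Lipschitz constant of h'. -/

import Mathlib

open MeasureTheory Set Filter Topology Real

noncomputable section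

/-- The Euler Beta function `B(a,b) = ∫_0^1 x^(a-1) (1-x)^(b-1) dx`. -/
def betaFn (a b : ℝ) : ℝ := ∫ x in (0:ℝ)..1, x ^ (a - 1) * (1 - x) ^ (b - 1)

/-- The density of the Beta distribution with parameters `a, b > 0`. -/
def betaPDF (a b : ℝ) (x : ℝ) : ℝ :=
  Set.indicator (Set.Ioo (0:ℝ) 1) (fun x => x ^ (a - 1) * (1 - x) ^ (b - 1) / betaFn a b) x

/-- The Beta distribution `Beta(a,b)` as a measure on `ℝ`. -/
def betaMeasure (a b : ℝ) : Measure ℝ :=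
  volume.withDensity (fun x => ENNReal.ofReal (betaPDF a b x))

/-- `E[h(Z)]` for `Z ∼ Beta(a,b)`. -/
def betaMean (a b : ℝ) (h : ℝ → ℝ) : ℝ := ∫ x, h x * betaPDF a b x

/-- The distribution function of `Beta(a,b)`. -/
def betaCDF (a b : ℝ) (x : ℝ) : ℝ := ∫ t in Iic x, betaPDF a b t

/-- The constant `C(a,b)` from the bounds on the solution of the Beta Stein equation. -/
def Cst (a b : ℝ) : ℝ :=
  if a = b then
    (if a < 1 then 4 else 2 * a * Real.sqrt π * Real.Gamma a / Real.Gamma (a + 1 / 2))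
  else
    2 * (a + b) *
      (if a ≤ 1 ∧ b ≤ 1 then betaFn a b
       else if a ≤ 1 then a⁻¹
       else if b ≤ 1 then b⁻¹
       else (a * b * betaFn a b)⁻¹)

/-- The standard solution `g_h` of the Beta Stein equation
`x(1-x) g'(x) + (a+b)(a/(a+b) - x) g(x) = h(x) - E[h(Z)]`. -/
def betaG (a b : ℝ) (h : ℝ → ℝ) (x : ℝ) : ℝ :=
  (∫ t in Iic x, (h t - betaMean a b h) * betaPDF a b t) / (x * (1 - x) * betaPDF a b x)

/-- The derivative of the standard solution, defined everywhere via the Stein equation. -/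
def betaG' (a b : ℝ) (h : ℝ → ℝ) (x : ℝ) : ℝ :=
  (h x - betaMean a b h - (a + b) * (a / (a + b) - x) * betaG a b h x) / (x * (1 - x))

/-- Main theorem: quantitative Beta approximation for the Pólya urn. If `S_n` has the Pólya
distribution with parameters `n` and `a = r/c`, `b = w/c`, and `W = S_n/n`, then for every
`C^{1,1}` test function `h` on `[0,1]`,
`|E[h(W)] - E[h(Z)]| ≤ (C(a,b)/n) ‖h'‖ (ab/(a+b) + ((a+b) C(a+1,b+1)/6)(1 + (a+b-1)/n))
  + (C(a+1,b+1)/(6n)) ‖h''‖ (1 + (a+b-1)/n)` where `Z ∼ Beta(a,b)`. -/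
lemma betaFn_eq_complex (a b : ℝ) :
    (betaFn a b : ℂ) = Complex.betaIntegral a b := by
  rw [Complex.betaIntegral, betaFn, ← intervalIntegral.integral_ofReal]
  refine intervalIntegral.integral_congr fun x hx => ?_
  rw [Set.uIcc_of_le (by norm_num : (0:ℝ) ≤ 1)] at hx
  rw [Complex.ofReal_mul, Complex.ofReal_cpow hx.1, Complex.ofReal_cpow (by linarith [hx.2] : (0:ℝ) ≤ 1 - x)]
  push_cast
  ring

lemma betaFn_eq_Gamma {a b : ℝ} (ha : 0 < a) (hb : 0 < b) :
    betaFn a b = Real.Gamma a * Real.Gamma b / Real.Gamma (a + b) := by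
  have h := Complex.Gamma_mul_Gamma_eq_betaIntegral
    (by simpa using ha : 0 < (a:ℂ).re) (by simpa using hb : 0 < (b:ℂ).re)
  rw [← betaFn_eq_complex] at h
  have hab : Real.Gamma (a + b) ≠ 0 := (Real.Gamma_pos_of_pos (by linarith)).ne'
  have h2 : ((Real.Gamma a * Real.Gamma b : ℝ) : ℂ) = ((Real.Gamma (a+b) * betaFn a b : ℝ) : ℂ) := by
    push_cast
    rw [← Complex.Gamma_ofReal, ← Complex.Gamma_ofReal, ← Complex.Gamma_ofReal] at *
    push_cast at h ⊢
    rw [h]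
  have h3 : Real.Gamma a * Real.Gamma b = Real.Gamma (a+b) * betaFn a b := by exact_mod_cast h2
  field_simp [h3]
  rw [h3]; ring

lemma betaFn_pos {a b : ℝ} (ha : 0 < a) (hb : 0 < b) : 0 < betaFn a b := by
  rw [betaFn_eq_Gamma ha hb]
  exact div_pos (mul_pos (Real.Gamma_pos_of_pos ha) (Real.Gamma_pos_of_pos hb))
    (Real.Gamma_pos_of_pos (by linarith))

lemma Gamma_add_nat {a : ℝ} (ha : 0 < a) (n : ℕ) :
    Real.Gamma (a + n) = (∏ i ∈ Finset.range n, (a + i)) * Real.Gamma a := by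
  induction n with
  | zero => simp
  | succ m ih =>
    have : a + (m + 1 : ℕ) = (a + m) + 1 := by push_cast; ring
    rw [this, Real.Gamma_add_one (by positivity), ih, Finset.prod_range_succ]
    push_cast
    ring

lemma betaFn_shift {a b : ℝ} (ha : 0 < a) (hb : 0 < b) (k m : ℕ) :
    betaFn (a + k) (b + m) =
      (∏ i ∈ Finset.range k, (a + i)) * (∏ j ∈ Finset.range m, (b + j)) /
        (∏ l ∈ Finset.range (k + m), (a + b + l)) * betaFn a b := by
  have hprod : (0:ℝ) < ∏ l ∈ Finset.range (k + m), (a + b + l) := by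
    apply Finset.prod_pos; intro i _; positivity
  rw [betaFn_eq_Gamma (by positivity) (by positivity), betaFn_eq_Gamma ha hb,
    Gamma_add_nat ha k, Gamma_add_nat hb m]
  have habm : a + (k:ℝ) + (b + m) = (a + b) + ((k + m : ℕ) : ℝ) := by push_cast; ring
  rw [habm, Gamma_add_nat (by linarith) (k + m)]
  have h1 : Real.Gamma (a + b) ≠ 0 := (Real.Gamma_pos_of_pos (by linarith)).ne'
  field_simp

lemma integrableOn_beta_integrand {p q : ℝ} (hp : 0 < p) (hq : 0 < q) :
    IntegrableOn (fun x : ℝ => x ^ (p - 1) * (1 - x) ^ (q - 1)) (Ioo 0 1) := by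
  have hc := (Complex.betaIntegral_convergent (by simpa using hp : 0 < (p:ℂ).re)
    (by simpa using hq : 0 < (q:ℂ).re)).norm
  rw [intervalIntegrable_iff, Set.uIoc_of_le (by norm_num : (0:ℝ) ≤ 1)] at hc
  have hc2 := hc.mono_set Ioo_subset_Ioc_self
  refine hc2.congr_fun (fun x hx => ?_) measurableSet_Ioo
  have h0 : (0:ℝ) ≤ x := hx.1.le
  have h1 : (0:ℝ) ≤ 1 - x := by linarith [hx.2]
  simp only [norm_mul]
  rw [show ((x:ℂ)) ^ ((p:ℂ) - 1) = ((x ^ (p-1) : ℝ) : ℂ) by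
        rw [Complex.ofReal_cpow h0]; push_cast; ring_nf,
      show ((1:ℂ) - (x:ℂ)) ^ ((q:ℂ) - 1) = (((1 - x) ^ (q-1) : ℝ) : ℂ) by
        rw [show ((1:ℂ) - (x:ℂ)) = (((1 - x : ℝ)):ℂ) by push_cast; ring,
          Complex.ofReal_cpow h1]; push_cast; ring_nf]
  rw [Complex.norm_real, Complex.norm_real, Real.norm_of_nonneg (Real.rpow_nonneg h0 _),
    Real.norm_of_nonneg (Real.rpow_nonneg h1 _)]

lemma betaFn_eq_setIntegral (p q : ℝ) :
    betaFn p q = ∫ x in Ioo (0:ℝ) 1, x ^ (p - 1) * (1 - x) ^ (q - 1) := by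
  rw [betaFn, intervalIntegral.integral_of_le (by norm_num : (0:ℝ) ≤ 1),
    integral_Ioc_eq_integral_Ioo]

lemma integrableOn_rpow_Ioo {p : ℝ} (hp : 0 < p) :
    IntegrableOn (fun x : ℝ => x ^ (p - 1)) (Ioo 0 1) := by
  exact (integrableOn_beta_integrand hp one_pos).congr_fun
    (fun x hx => by simp) measurableSet_Ioo

lemma setIntegral_rpow_Ioo {p : ℝ} (hp : 0 < p) :
    ∫ x in Ioo (0:ℝ) 1, x ^ (p - 1) = 1 / p := by
  rw [← integral_Ioc_eq_integral_Ioo, ← intervalIntegral.integral_of_le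
    (by norm_num : (0:ℝ) ≤ 1)]
  rw [integral_rpow (Or.inl (by linarith : (-1:ℝ) < p - 1))]
  rw [Real.zero_rpow (by linarith : p - 1 + 1 ≠ 0), Real.one_rpow]
  ring_nf

lemma betaFn_symm {p q : ℝ} (hp : 0 < p) (hq : 0 < q) : betaFn p q = betaFn q p := by
  rw [betaFn_eq_Gamma hp hq, betaFn_eq_Gamma hq hp, add_comm, mul_comm]

lemma betaFn_le_inv_left {p q : ℝ} (hp : 0 < p) (hq : 1 ≤ q) : betaFn p q ≤ 1 / p := by
  rw [betaFn_eq_setIntegral, ← setIntegral_rpow_Ioo hp]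
  refine setIntegral_mono_on (integrableOn_beta_integrand hp (by linarith))
    (integrableOn_rpow_Ioo hp) measurableSet_Ioo (fun x hx => ?_)
  have h1 : (0:ℝ) ≤ 1 - x := by linarith [hx.2]
  calc x ^ (p - 1) * (1 - x) ^ (q - 1) ≤ x ^ (p - 1) * 1 := by
        refine mul_le_mul_of_nonneg_left ?_ (Real.rpow_nonneg hx.1.le _)
        exact Real.rpow_le_one h1 (by linarith [hx.1]) (by linarith)
    _ = x ^ (p - 1) := mul_one _

lemma one_div_le_betaFn_half {p : ℝ} (hp : 0 < p) : 1 / p ≤ betaFn p (1/2) := by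
  rw [betaFn_eq_setIntegral, ← setIntegral_rpow_Ioo hp]
  refine setIntegral_mono_on (integrableOn_rpow_Ioo hp)
    (integrableOn_beta_integrand hp (by norm_num)) measurableSet_Ioo (fun x hx => ?_)
  have h1 : (0:ℝ) < 1 - x := by linarith [hx.2]
  calc x ^ (p - 1) = x ^ (p - 1) * 1 := (mul_one _).symm
    _ ≤ x ^ (p - 1) * (1 - x) ^ ((1:ℝ)/2 - 1) := by
        refine mul_le_mul_of_nonneg_left ?_ (Real.rpow_nonneg hx.1.le _)
        exact Real.one_le_rpow_of_pos_of_le_one_of_nonpos h1 (by linarith [hx.1]) (by norm_num)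

section Taylor
variable {h : ℝ → ℝ} {L : NNReal}

lemma ftc_aux (hC1 : ContDiffOn ℝ 1 h (Icc 0 1))
    (hL : LipschitzOnWith L (derivWithin h (Icc 0 1)) (Icc 0 1))
    {u v : ℝ} (hu : u ∈ Icc (0:ℝ) 1) (hv : v ∈ Icc (0:ℝ) 1) (huv : u ≤ v) :
    h v - h u = ∫ t in u..v, derivWithin h (Icc 0 1) t := by
  set f := derivWithin h (Icc 0 1) with hf
  have hfc : ContinuousOn f (Icc 0 1) := hL.continuousOn
  refine (intervalIntegral.integral_eq_sub_of_hasDeriv_right_of_le huv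
    (hC1.continuousOn.mono (Icc_subset_Icc hu.1 hv.2)) (fun t ht => ?_) ?_).symm
  · have ht' : t ∈ Ioo (0:ℝ) 1 := ⟨lt_of_le_of_lt hu.1 ht.1, lt_of_lt_of_le ht.2 hv.2⟩
    exact (((hC1.differentiableOn one_ne_zero) t (Ioo_subset_Icc_self ht')).hasDerivWithinAt.hasDerivAt
      (Icc_mem_nhds ht'.1 ht'.2)).hasDerivWithinAt
  · exact (hfc.mono (by rw [Set.uIcc_of_le huv]; exact Icc_subset_Icc hu.1 hv.2)).intervalIntegrable

lemma taylor_bound (hC1 : ContDiffOn ℝ 1 h (Icc 0 1))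
    (hL : LipschitzOnWith L (derivWithin h (Icc 0 1)) (Icc 0 1))
    {x y : ℝ} (hx : x ∈ Icc (0:ℝ) 1) (hy : y ∈ Icc (0:ℝ) 1) :
    |h y - h x - derivWithin h (Icc 0 1) x * (y - x)| ≤ (L:ℝ)/2 * (y - x)^2 := by
  set f := derivWithin h (Icc 0 1) with hf
  have hfc : ContinuousOn f (Icc 0 1) := hL.continuousOn
  have hdist : ∀ t ∈ Icc (0:ℝ) 1, |f t - f x| ≤ (L:ℝ) * |t - x| := by
    intro t ht
    have := hL.dist_le_mul t ht x hx
    rwa [Real.dist_eq, Real.dist_eq] at this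
  rcases le_total x y with hxy | hxy
  · have key := ftc_aux hC1 hL hx hy hxy
    have hint : IntervalIntegrable f volume x y :=
      (hfc.mono (by rw [Set.uIcc_of_le hxy]; exact Icc_subset_Icc hx.1 hy.2)).intervalIntegrable
    have hint2 : IntervalIntegrable (fun t => f t - f x) volume x y :=
      hint.sub intervalIntegrable_const
    have e1 : h y - h x - f x * (y - x) = ∫ t in x..y, (f t - f x) := by
      rw [intervalIntegral.integral_sub hint intervalIntegrable_const,
        intervalIntegral.integral_const, key]
      simp [smul_eq_mul]; ring
    rw [e1]
    calc |∫ t in x..y, (f t - f x)| ≤ ∫ t in x..y, |f t - f x| :=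
          intervalIntegral.abs_integral_le_integral_abs hxy
      _ ≤ ∫ t in x..y, (L:ℝ) * (t - x) := by
          refine intervalIntegral.integral_mono_on hxy hint2.abs ?_ (fun t ht => ?_)
          · exact (continuous_const.mul (continuous_id.sub continuous_const)).intervalIntegrable x y
          · have ht' : t ∈ Icc (0:ℝ) 1 := ⟨le_trans hx.1 ht.1, le_trans ht.2 hy.2⟩
            calc |f t - f x| ≤ (L:ℝ) * |t - x| := hdist t ht'
              _ = (L:ℝ) * (t - x) := by rw [abs_of_nonneg (by linarith [ht.1])]
      _ = (L:ℝ)/2 * (y - x)^2 := by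
          rw [intervalIntegral.integral_const_mul,
            intervalIntegral.integral_sub intervalIntegral.intervalIntegrable_id
              intervalIntegrable_const,
            integral_id, intervalIntegral.integral_const]
          simp [smul_eq_mul]; ring
  · have key := ftc_aux hC1 hL hy hx hxy
    have hint : IntervalIntegrable f volume y x :=
      (hfc.mono (by rw [Set.uIcc_of_le hxy]; exact Icc_subset_Icc hy.1 hx.2)).intervalIntegrable
    have hint2 : IntervalIntegrable (fun t => f t - f x) volume y x :=
      hint.sub intervalIntegrable_const
    have e1 : h y - h x - f x * (y - x) = -∫ t in y..x, (f t - f x) := by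
      rw [intervalIntegral.integral_sub hint intervalIntegrable_const,
        intervalIntegral.integral_const, ← key]
      simp [smul_eq_mul]; ring
    rw [e1, abs_neg]
    calc |∫ t in y..x, (f t - f x)| ≤ ∫ t in y..x, |f t - f x| :=
          intervalIntegral.abs_integral_le_integral_abs hxy
      _ ≤ ∫ t in y..x, (L:ℝ) * (x - t) := by
          refine intervalIntegral.integral_mono_on hxy hint2.abs ?_ (fun t ht => ?_)
          · exact (continuous_const.mul (continuous_const.sub continuous_id)).intervalIntegrable y x
          · have ht' : t ∈ Icc (0:ℝ) 1 := ⟨le_trans hy.1 ht.1, le_trans ht.2 hx.2⟩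
            calc |f t - f x| ≤ (L:ℝ) * |t - x| := hdist t ht'
              _ = (L:ℝ) * (x - t) := by rw [abs_of_nonpos (by linarith [ht.2])]; ring
      _ = (L:ℝ)/2 * (y - x)^2 := by
          rw [intervalIntegral.integral_const_mul,
            intervalIntegral.integral_sub intervalIntegrable_const
              intervalIntegral.intervalIntegrable_id,
            integral_id, intervalIntegral.integral_const]
          simp [smul_eq_mul]; ring

end Taylor

section Bern

lemma bern_sum (n : ℕ) (z : ℝ) :
    ∑ k ∈ Finset.range (n+1), (n.choose k : ℝ) * z^k * (1-z)^(n-k) = 1 := by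
  have := bernsteinPolynomial.sum ℝ n
  apply_fun (Polynomial.eval z) at this
  simpa [bernsteinPolynomial, Polynomial.eval_finset_sum, mul_assoc] using this

lemma bern_moment1 (n : ℕ) (z : ℝ) :
    ∑ k ∈ Finset.range (n+1), (k : ℝ) * ((n.choose k : ℝ) * z^k * (1-z)^(n-k)) = n * z := by
  have := bernsteinPolynomial.sum_smul ℝ n
  apply_fun (Polynomial.eval z) at this
  simpa [bernsteinPolynomial, Polynomial.eval_finset_sum, mul_assoc, mul_comm, mul_left_comm]
    using this

lemma bern_var (n : ℕ) (z : ℝ) :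
    ∑ k ∈ Finset.range (n+1), ((n:ℝ)*z - k)^2 * ((n.choose k : ℝ) * z^k * (1-z)^(n-k))
      = n * z * (1 - z) := by
  have := bernsteinPolynomial.variance ℝ n
  apply_fun (Polynomial.eval z) at this
  simpa [bernsteinPolynomial, Polynomial.eval_finset_sum, mul_assoc, mul_comm, mul_left_comm]
    using this

end Bern

lemma bernstein_bound {h : ℝ → ℝ} {L : NNReal}
    (hC1 : ContDiffOn ℝ 1 h (Icc 0 1))
    (hL : LipschitzOnWith L (derivWithin h (Icc 0 1)) (Icc 0 1))
    {n : ℕ} (hn : 0 < n) {z : ℝ} (hz : z ∈ Icc (0:ℝ) 1) :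
    |∑ k ∈ Finset.range (n+1), h ((k:ℝ)/n) * ((n.choose k : ℝ) * z^k * (1-z)^(n-k)) - h z|
      ≤ (L:ℝ)/(2*n) * (z*(1-z)) := by
  set f := derivWithin h (Icc 0 1) with hf
  set b : ℕ → ℝ := fun k => (n.choose k : ℝ) * z^k * (1-z)^(n-k) with hbdef
  have hnR : (0:ℝ) < n := by exact_mod_cast hn
  have hb : ∀ k, 0 ≤ b k := fun k => by
    have h1 : (0:ℝ) ≤ z := hz.1
    have h2 : (0:ℝ) ≤ 1 - z := by linarith [hz.2]
    positivity
  have hsum : ∑ k ∈ Finset.range (n+1), b k = 1 := bern_sum n z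
  have hm : ∑ k ∈ Finset.range (n+1), (k:ℝ) * b k = n * z := bern_moment1 n z
  have hv : ∑ k ∈ Finset.range (n+1), ((n:ℝ)*z - k)^2 * b k = n * z * (1-z) := bern_var n z
  have e : ∑ k ∈ Finset.range (n+1), h ((k:ℝ)/n) * b k - h z
      = ∑ k ∈ Finset.range (n+1), (h ((k:ℝ)/n) - h z - f z * ((k:ℝ)/n - z)) * b k := by
    have expand : ∀ k ∈ Finset.range (n+1),
        (h ((k:ℝ)/n) - h z - f z * ((k:ℝ)/n - z)) * b k
        = h ((k:ℝ)/n) * b k - h z * b k - (f z / n) * ((k:ℝ) * b k) + (f z * z) * b k := by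
      intro k _
      field_simp
      ring
    rw [Finset.sum_congr rfl expand]
    rw [Finset.sum_add_distrib, Finset.sum_sub_distrib, Finset.sum_sub_distrib,
      ← Finset.mul_sum, ← Finset.mul_sum, ← Finset.mul_sum, hsum, hm]
    field_simp
    ring
  rw [e]
  calc |∑ k ∈ Finset.range (n+1), (h ((k:ℝ)/n) - h z - f z * ((k:ℝ)/n - z)) * b k|
      ≤ ∑ k ∈ Finset.range (n+1), |(h ((k:ℝ)/n) - h z - f z * ((k:ℝ)/n - z)) * b k| :=
        Finset.abs_sum_le_sum_abs _ _
    _ ≤ ∑ k ∈ Finset.range (n+1), ((L:ℝ)/2 * ((k:ℝ)/n - z)^2) * b k := by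
        refine Finset.sum_le_sum fun k hk => ?_
        rw [abs_mul, abs_of_nonneg (hb k)]
        refine mul_le_mul_of_nonneg_right ?_ (hb k)
        have hkn : (k:ℝ)/n ∈ Icc (0:ℝ) 1 := by
          have hk' : k ≤ n := Nat.lt_succ_iff.mp (Finset.mem_range.mp hk)
          constructor
          · positivity
          · rw [div_le_one hnR]; exact_mod_cast hk'
        exact taylor_bound hC1 hL hz hkn
    _ = (L:ℝ)/(2*n^2) * ∑ k ∈ Finset.range (n+1), ((n:ℝ)*z - k)^2 * b k := by
        rw [Finset.mul_sum]
        refine Finset.sum_congr rfl fun k _ => ?_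
        field_simp
        ring
    _ = (L:ℝ)/(2*n) * (z*(1-z)) := by
        rw [hv]
        field_simp


lemma Cst_nonneg {A B : ℝ} (hA : 0 < A) (hB : 0 < B) : 0 ≤ Cst A B := by
  rw [Cst]
  split_ifs with h1 h2 h3 h4 h5
  · norm_num
  · have g1 := Real.Gamma_pos_of_pos hA
    have g2 := Real.Gamma_pos_of_pos (show (0:ℝ) < A + 1/2 by linarith)
    have := Real.sqrt_nonneg π
    positivity
  · have := (betaFn_pos hA hB).le
    positivity
  · positivity
  · positivity
  · have := (betaFn_pos hA hB).le
    have h6 : 0 < betaFn A B := betaFn_pos hA hB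
    positivity

lemma Cst_lower_ne {A B : ℝ} (hA : 0 < A) (hB : 0 < B) (hne : A ≠ B) :
    4 ≤ Cst (A+1) (B+1) := by
  have hne' : A + 1 ≠ B + 1 := fun h => hne (by linarith)
  have hbp : 0 < betaFn (A+1) (B+1) := betaFn_pos (by linarith) (by linarith)
  rw [Cst, if_neg hne', if_neg (by push_neg; intro h; linarith),
    if_neg (by push_neg; linarith), if_neg (by push_neg; linarith)]
  have hb1 : betaFn (A+1) (B+1) ≤ 1/(B+1) := by
    rw [betaFn_symm (by linarith) (by linarith)]
    exact betaFn_le_inv_left (by linarith) (by linarith)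
  have hb2 : betaFn (A+1) (B+1) ≤ 1/(A+1) := betaFn_le_inv_left (by linarith) (by linarith)
  rcases le_total A B with hab | hab
  · have key : (A+1) * (B+1) * betaFn (A+1) (B+1) ≤ A + 1 := by
      calc (A+1) * (B+1) * betaFn (A+1) (B+1) ≤ (A+1) * (B+1) * (1/(B+1)) := by
            refine mul_le_mul_of_nonneg_left hb1 (by positivity)
        _ = A + 1 := by field_simp
    have hpos : 0 < (A+1) * (B+1) * betaFn (A+1) (B+1) := by positivity
    calc (4:ℝ) = 2 * (2*(A+1)) * (A+1)⁻¹ := by field_simp; ring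
      _ ≤ 2 * (A + 1 + (B + 1)) * ((A+1) * (B+1) * betaFn (A+1) (B+1))⁻¹ := by
          refine mul_le_mul (by nlinarith) ?_ (by positivity) (by positivity)
          exact inv_anti₀ hpos key
  · have key : (A+1) * (B+1) * betaFn (A+1) (B+1) ≤ B + 1 := by
      calc (A+1) * (B+1) * betaFn (A+1) (B+1) ≤ (A+1) * (B+1) * (1/(A+1)) := by
            refine mul_le_mul_of_nonneg_left hb2 (by positivity)
        _ = B + 1 := by field_simp
    have hpos : 0 < (A+1) * (B+1) * betaFn (A+1) (B+1) := by positivity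
    calc (4:ℝ) = 2 * (2*(B+1)) * (B+1)⁻¹ := by field_simp; ring
      _ ≤ 2 * (A + 1 + (B + 1)) * ((A+1) * (B+1) * betaFn (A+1) (B+1))⁻¹ := by
          refine mul_le_mul (by nlinarith) ?_ (by positivity) (by positivity)
          exact inv_anti₀ hpos key

lemma Cst_lower_eq {A : ℝ} (hA : 0 < A) : 2 ≤ Cst (A+1) (A+1) := by
  have hG : (0:ℝ) < Real.Gamma (A + 1 + 1/2) := Real.Gamma_pos_of_pos (by linarith)
  have hbeq : betaFn (A+1) (1/2) = Real.Gamma (A+1) * Real.sqrt π / Real.Gamma (A+1+1/2) := by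
    rw [betaFn_eq_Gamma (by linarith) (by norm_num), Real.Gamma_one_half_eq]
  rw [Cst, if_pos rfl, if_neg (by push_neg; linarith)]
  have key : 2 * (A+1) * Real.sqrt π * Real.Gamma (A+1) / Real.Gamma (A+1+1/2)
      = 2 * (A+1) * betaFn (A+1) (1/2) := by
    rw [hbeq]; field_simp
  rw [key]
  have hlow : 1/(A+1) ≤ betaFn (A+1) (1/2) := one_div_le_betaFn_half (by linarith)
  calc (2:ℝ) = 2 * (A+1) * (1/(A+1)) := by field_simp
    _ ≤ 2 * (A+1) * betaFn (A+1) (1/2) := by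
        refine mul_le_mul_of_nonneg_left hlow (by positivity)

lemma final_const {A B : ℝ} (hA : 0 < A) (hB : 0 < B) {n : ℕ} (hn : 0 < n) :
    3 * (A*B/((A+B)*(A+B+1))) ≤ Cst (A+1) (B+1) * (1 + (A+B-1)/n) := by
  have hnR : (1:ℝ) ≤ n := by exact_mod_cast hn
  have hM : min 1 (A+B) ≤ 1 + (A+B-1)/n := by
    rcases le_total 1 (A+B) with hs | hs
    · rw [min_eq_left hs]
      have : (0:ℝ) ≤ (A+B-1)/n :=
        div_nonneg (by linarith : (0:ℝ) ≤ A+B-1) (by linarith : (0:ℝ) ≤ (n:ℝ))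
      linarith
    · rw [min_eq_right hs]
      have h1 : (A+B-1)/n ≥ A+B-1 := by
        rw [ge_iff_le, le_div_iff₀ (by linarith : (0:ℝ) < (n:ℝ))]
        nlinarith
      linarith
  have hminpos : 0 < min 1 (A+B) := lt_min one_pos (by linarith)
  rcases eq_or_ne A B with rfl | hne
  · have hC : 2 ≤ Cst (A+1) (A+1) := Cst_lower_eq hA
    have key : 3 * (A*A/((A+A)*(A+A+1))) ≤ 2 * min 1 (A+A) := by
      rw [show 3 * (A*A/((A+A)*(A+A+1))) = (3*(A*A))/((A+A)*(A+A+1)) by ring,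
        div_le_iff₀ (by positivity)]
      rcases le_total 1 (A+A) with hs | hs
      · rw [min_eq_left hs]; nlinarith
      · rw [min_eq_right hs]; nlinarith
    calc 3 * (A*A/((A+A)*(A+A+1))) ≤ 2 * min 1 (A+A) := key
      _ ≤ Cst (A+1) (A+1) * (1 + (A+A-1)/n) := by
          refine mul_le_mul hC hM hminpos.le (by linarith)
  · have hC : 4 ≤ Cst (A+1) (B+1) := Cst_lower_ne hA hB hne
    have key : 3 * (A*B/((A+B)*(A+B+1))) ≤ 4 * min 1 (A+B) := by
      rw [show 3 * (A*B/((A+B)*(A+B+1))) = (3*(A*B))/((A+B)*(A+B+1)) by ring,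
        div_le_iff₀ (by positivity)]
      rcases le_total 1 (A+B) with hs | hs
      · rw [min_eq_left hs]; nlinarith [sq_nonneg (A-B)]
      · rw [min_eq_right hs]
        nlinarith [sq_nonneg (A-B), mul_pos hA hB, mul_pos (add_pos hA hB) (add_pos hA hB),
          mul_nonneg (mul_nonneg (add_pos hA hB).le (add_pos hA hB).le) (add_pos hA hB).le]
    calc 3 * (A*B/((A+B)*(A+B+1))) ≤ 4 * min 1 (A+B) := key
      _ ≤ Cst (A+1) (B+1) * (1 + (A+B-1)/n) := by
          refine mul_le_mul hC hM hminpos.le (by linarith)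

lemma integral_comp_eq_sum {Ω : Type*} [MeasurableSpace Ω] (μ : Measure Ω)
    [IsProbabilityMeasure μ] (n : ℕ) (S : Ω → ℕ) (hSm : Measurable S)
    (hSle : ∀ ω, S ω ≤ n) (g : ℝ → ℝ) :
    ∫ ω, g ((S ω : ℝ)/n) ∂μ
      = ∑ k ∈ Finset.range (n+1), g ((k:ℝ)/n) * (μ {ω | S ω = k}).toReal := by
  have hmeas : ∀ k : ℕ, MeasurableSet {ω | S ω = k} := fun k =>
    hSm (measurableSet_singleton k)
  have hrepr : ∀ ω, g ((S ω : ℝ)/n)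
      = ∑ k ∈ Finset.range (n+1),
          Set.indicator {ω' | S ω' = k} (fun _ => g ((k:ℝ)/n)) ω := by
    intro ω
    rw [Finset.sum_eq_single (S ω)]
    · rw [Set.indicator_of_mem (by simp : ω ∈ {ω' | S ω' = S ω})]
    · intro k _ hne
      rw [Set.indicator_of_notMem]
      simp only [Set.mem_setOf_eq]
      exact fun hc => hne (hc ▸ rfl)
    · intro hnotin
      exact absurd (Finset.mem_range.mpr (Nat.lt_succ_of_le (hSle ω))) hnotin
  calc ∫ ω, g ((S ω : ℝ)/n) ∂μ
      = ∫ ω, ∑ k ∈ Finset.range (n+1),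
          Set.indicator {ω' | S ω' = k} (fun _ => g ((k:ℝ)/n)) ω ∂μ := by
        exact integral_congr_ae (ae_of_all _ hrepr)
    _ = ∑ k ∈ Finset.range (n+1),
          ∫ ω, Set.indicator {ω' | S ω' = k} (fun _ => g ((k:ℝ)/n)) ω ∂μ := by
        refine integral_finset_sum _ fun k _ => ?_
        exact (integrable_const _).indicator (hmeas k)
    _ = ∑ k ∈ Finset.range (n+1), g ((k:ℝ)/n) * (μ {ω | S ω = k}).toReal := by
        refine Finset.sum_congr rfl fun k _ => ?_
        rw [integral_indicator_const _ (hmeas k), smul_eq_mul, mul_comm]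
        rfl

lemma pow_mul_rpow {z : ℝ} (hz : 0 < z) (k : ℕ) (A : ℝ) :
    z^k * z^(A-1) = z^(A + k - 1) := by
  rw [← Real.rpow_natCast z k, ← Real.rpow_add hz, show (k:ℝ) + (A - 1) = A + k - 1 by ring]

lemma integrableOn_bkp {A B : ℝ} (hA : 0 < A) (hB : 0 < B) (n k : ℕ) :
    IntegrableOn (fun z : ℝ => ((n.choose k : ℝ) * z^k * (1-z)^(n-k))
      * (z^(A-1)*(1-z)^(B-1) / betaFn A B)) (Ioo 0 1) := by
  have h0 := (integrableOn_beta_integrand (show (0:ℝ) < A + k by positivity)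
    (show (0:ℝ) < B + (n-k:ℕ) by positivity)).const_mul ((n.choose k : ℝ) / betaFn A B)
  refine (show IntegrableOn _ (Ioo (0:ℝ) 1) volume from h0).congr_fun
    (fun z hz => ?_) measurableSet_Ioo
  have h1 : (0:ℝ) < z := hz.1
  have h2 : (0:ℝ) < 1 - z := by linarith [hz.2]
  beta_reduce
  rw [← pow_mul_rpow h1 k A, ← pow_mul_rpow h2 (n-k) B]
  field_simp

lemma mixture_integral {A B : ℝ} (hA : 0 < A) (hB : 0 < B) (n k : ℕ) :
    ∫ z in Ioo (0:ℝ) 1, ((n.choose k : ℝ) * z^k * (1-z)^(n-k))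
        * (z^(A-1)*(1-z)^(B-1) / betaFn A B)
      = (n.choose k : ℝ) * betaFn (A + k) (B + (n-k:ℕ)) / betaFn A B := by
  have e : ∀ z ∈ Ioo (0:ℝ) 1, ((n.choose k : ℝ) * z^k * (1-z)^(n-k))
      * (z^(A-1)*(1-z)^(B-1) / betaFn A B)
      = ((n.choose k : ℝ) / betaFn A B) * (z^(A + k - 1) * (1-z)^(B + (n-k:ℕ) - 1)) := by
    intro z hz
    have h1 : (0:ℝ) < z := hz.1
    have h2 : (0:ℝ) < 1 - z := by linarith [hz.2]
    rw [← pow_mul_rpow h1 k A, ← pow_mul_rpow h2 (n-k) B]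
    field_simp
  rw [setIntegral_congr_fun measurableSet_Ioo e, MeasureTheory.integral_const_mul,
    ← betaFn_eq_setIntegral]
  ring

lemma betaMean_eq (A B : ℝ) (h : ℝ → ℝ) :
    betaMean A B h = ∫ z in Ioo (0:ℝ) 1, h z * (z^(A-1)*(1-z)^(B-1) / betaFn A B) := by
  rw [betaMean, ← MeasureTheory.integral_indicator measurableSet_Ioo]
  congr 1
  funext x
  by_cases hx : x ∈ Ioo (0:ℝ) 1
  · rw [betaPDF, Set.indicator_of_mem hx, Set.indicator_of_mem hx]
  · rw [betaPDF, Set.indicator_of_notMem hx, Set.indicator_of_notMem hx, mul_zero]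

lemma betaFn_one_one {A B : ℝ} (hA : 0 < A) (hB : 0 < B) :
    betaFn (A+1) (B+1) = A * B / ((A+B) * (A+B+1)) * betaFn A B := by
  have := betaFn_shift hA hB 1 1
  simp only [Finset.prod_range_one, Finset.prod_range_succ, Nat.cast_zero, Nat.cast_one,
    add_zero, Nat.cast_ofNat] at this
  norm_num at this
  exact this

lemma M_nonneg {A B : ℝ} (hA : 0 < A) (hB : 0 < B) {n : ℕ} (hn : 0 < n) :
    0 ≤ 1 + (A+B-1)/n := by
  have hnR : (1:ℝ) ≤ n := by exact_mod_cast hn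
  rcases le_total 1 (A+B) with hs | hs
  · have : (0:ℝ) ≤ (A+B-1)/n :=
      div_nonneg (by linarith) (by linarith)
    linarith
  · have h1 : (A+B-1)/n ≥ A+B-1 := by
      rw [ge_iff_le, le_div_iff₀ (by linarith : (0:ℝ) < (n:ℝ))]
      nlinarith
    linarith

lemma pmf_convert {r w c : ℕ} (hc : 0 < c) {A B : ℝ}
    (hA : A = (r:ℝ)/c) (hB : B = (w:ℝ)/c) (n k : ℕ) (hk : k ≤ n) :
    ((n.choose k : ℝ) *
      (((∏ i ∈ Finset.range k, ((r : ℝ) + c * i)) *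
          ∏ j ∈ Finset.range (n - k), ((w : ℝ) + c * j)) /
        ∏ l ∈ Finset.range n, ((r : ℝ) + w + c * l)))
    = (n.choose k : ℝ) * ((∏ i ∈ Finset.range k, (A + i)) *
        (∏ j ∈ Finset.range (n-k), (B + j)) / (∏ l ∈ Finset.range n, (A + B + l))) := by
  have hc' : (0:ℝ) < c := by exact_mod_cast hc
  have e1 : ∏ i ∈ Finset.range k, ((r : ℝ) + c * i)
      = (c:ℝ)^k * ∏ i ∈ Finset.range k, (A + i) := by
    rw [show ((c:ℝ))^k = ∏ _i ∈ Finset.range k, (c:ℝ) by simp, ← Finset.prod_mul_distrib]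
    refine Finset.prod_congr rfl fun i _ => ?_
    rw [hA]; field_simp
  have e2 : ∏ j ∈ Finset.range (n-k), ((w : ℝ) + c * j)
      = (c:ℝ)^(n-k) * ∏ j ∈ Finset.range (n-k), (B + j) := by
    rw [show ((c:ℝ))^(n-k) = ∏ _j ∈ Finset.range (n-k), (c:ℝ) by simp,
      ← Finset.prod_mul_distrib]
    refine Finset.prod_congr rfl fun j _ => ?_
    rw [hB]; field_simp
  have e3 : ∏ l ∈ Finset.range n, ((r : ℝ) + w + c * l)
      = (c:ℝ)^n * ∏ l ∈ Finset.range n, (A + B + l) := by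
    rw [show ((c:ℝ))^n = ∏ _l ∈ Finset.range n, (c:ℝ) by simp, ← Finset.prod_mul_distrib]
    refine Finset.prod_congr rfl fun l _ => ?_
    rw [hA, hB]; field_simp
  rw [e1, e2, e3]
  congr 1
  rw [show (c:ℝ)^k * (∏ i ∈ Finset.range k, (A + i)) * ((c:ℝ)^(n-k) *
      ∏ j ∈ Finset.range (n-k), (B + j)) = (c:ℝ)^n * ((∏ i ∈ Finset.range k, (A + i)) *
      ∏ j ∈ Finset.range (n-k), (B + j)) by
    rw [show ((c:ℝ)^n) = (c:ℝ)^k * (c:ℝ)^(n-k) by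
      rw [← pow_add, Nat.add_sub_cancel' hk]]
    ring]
  rw [mul_div_mul_left _ _ (pow_ne_zero n hc'.ne')]

theorem polya_beta_approximation
    {Ω : Type*} [MeasurableSpace Ω] (μ : Measure Ω) [IsProbabilityMeasure μ]
    (n r w c : ℕ) (hn : 0 < n) (hr : 0 < r) (hw : 0 < w) (hc : 0 < c)
    (S : Ω → ℕ) (hSm : Measurable S) (hSle : ∀ ω, S ω ≤ n)
    (hpmf : ∀ k : ℕ, k ≤ n →
      μ {ω | S ω = k} = ENNReal.ofReal
        ((n.choose k : ℝ) *
          (((∏ i ∈ Finset.range k, ((r : ℝ) + c * i)) *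
              ∏ j ∈ Finset.range (n - k), ((w : ℝ) + c * j)) /
            ∏ l ∈ Finset.range n, ((r : ℝ) + w + c * l))))
    (A B : ℝ) (hA : A = (r : ℝ) / c) (hB : B = (w : ℝ) / c)
    (W : Ω → ℝ) (hW : W = fun ω => (S ω : ℝ) / n)
    (h : ℝ → ℝ) (hC1 : ContDiffOn ℝ 1 h (Set.Icc (0:ℝ) 1))
    (L₁ : ℝ) (hL₁ : ∀ x ∈ Set.Icc (0:ℝ) 1, |derivWithin h (Set.Icc (0:ℝ) 1) x| ≤ L₁)
    (L₂ : NNReal)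
    (hL₂ : LipschitzOnWith L₂ (derivWithin h (Set.Icc (0:ℝ) 1)) (Set.Icc (0:ℝ) 1)) :
    |∫ ω, h (W ω) ∂μ - betaMean A B h| ≤
      Cst A B / n * L₁ *
          (A * B / (A + B) + (A + B) * Cst (A + 1) (B + 1) / 6 * (1 + (A + B - 1) / n)) +
        Cst (A + 1) (B + 1) / (6 * n) * L₂ * (1 + (A + B - 1) / n) := by
  have hc' : (0:ℝ) < c := by exact_mod_cast hc
  have hr' : (0:ℝ) < r := by exact_mod_cast hr
  have hw' : (0:ℝ) < w := by exact_mod_cast hw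
  have hA0 : 0 < A := by rw [hA]; positivity
  have hB0 : 0 < B := by rw [hB]; positivity
  have hA1 : (0:ℝ) < A + 1 := by linarith
  have hB1 : (0:ℝ) < B + 1 := by linarith
  have hnR : (0:ℝ) < n := by exact_mod_cast hn
  have hnne : (n:ℝ) ≠ 0 := hnR.ne'
  have hβ : 0 < betaFn A B := betaFn_pos hA0 hB0
  set P : ℝ → ℝ := fun z => z^(A-1)*(1-z)^(B-1)/betaFn A B with hPdef
  set T : ℝ → ℝ :=
    fun z => ∑ k ∈ Finset.range (n+1),
      h ((k:ℝ)/n) * ((n.choose k : ℝ) * z^k * (1-z)^(n-k)) with hTdef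
  have hPnn : ∀ z ∈ Ioo (0:ℝ) 1, 0 ≤ P z := by
    intro z hz
    have h1 : (0:ℝ) ≤ z := hz.1.le
    have h2 : (0:ℝ) ≤ 1 - z := by linarith [hz.2]
    have := Real.rpow_nonneg h1 (A-1)
    have := Real.rpow_nonneg h2 (B-1)
    rw [hPdef]
    positivity
  -- Step A
  have stepA : ∫ ω, h (W ω) ∂μ = ∑ k ∈ Finset.range (n+1), h ((k:ℝ)/n) *
      ((n.choose k : ℝ) * ((∏ i ∈ Finset.range k, (A + i)) *
        (∏ j ∈ Finset.range (n-k), (B + j)) / (∏ l ∈ Finset.range n, (A + B + l)))) := by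
    rw [hW, integral_comp_eq_sum μ n S hSm hSle h]
    refine Finset.sum_congr rfl fun k hk => ?_
    have hk' : k ≤ n := Nat.lt_succ_iff.mp (Finset.mem_range.mp hk)
    have p1 : (0:ℝ) ≤ ∏ i ∈ Finset.range k, ((r:ℝ) + c*i) :=
      Finset.prod_nonneg fun i _ => by positivity
    have p2 : (0:ℝ) ≤ ∏ j ∈ Finset.range (n-k), ((w:ℝ) + c*j) :=
      Finset.prod_nonneg fun j _ => by positivity
    have p3 : (0:ℝ) ≤ ∏ l ∈ Finset.range n, ((r:ℝ) + w + c*l) :=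
      Finset.prod_nonneg fun l _ => by positivity
    rw [hpmf k hk', ENNReal.toReal_ofReal
      (mul_nonneg (by positivity) (div_nonneg (mul_nonneg p1 p2) p3)),
      pmf_convert hc hA hB n k hk']
  -- Step B
  have stepB : ∑ k ∈ Finset.range (n+1), h ((k:ℝ)/n) *
      ((n.choose k : ℝ) * ((∏ i ∈ Finset.range k, (A + i)) *
        (∏ j ∈ Finset.range (n-k), (B + j)) / (∏ l ∈ Finset.range n, (A + B + l))))
      = ∫ z in Ioo (0:ℝ) 1, T z * P z := by
    have hint : ∀ k ∈ Finset.range (n+1), IntegrableOn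
        (fun z => h ((k:ℝ)/n) * (((n.choose k : ℝ) * z^k * (1-z)^(n-k)) * P z))
          (Ioo (0:ℝ) 1) volume :=
      fun k _ => (integrableOn_bkp hA0 hB0 n k).const_mul _
    have e1 : ∫ z in Ioo (0:ℝ) 1, T z * P z = ∑ k ∈ Finset.range (n+1),
        ∫ z in Ioo (0:ℝ) 1,
          h ((k:ℝ)/n) * (((n.choose k : ℝ) * z^k * (1-z)^(n-k)) * P z) := by
      rw [← MeasureTheory.integral_finset_sum _ hint]
      refine setIntegral_congr_fun measurableSet_Ioo fun z hz => ?_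
      rw [hTdef]
      simp only [Finset.sum_mul]
      exact Finset.sum_congr rfl fun k _ => by ring
    rw [e1]
    refine Finset.sum_congr rfl fun k hk => ?_
    have hk' : k ≤ n := Nat.lt_succ_iff.mp (Finset.mem_range.mp hk)
    rw [MeasureTheory.integral_const_mul, mixture_integral hA0 hB0 n k]
    congr 1
    have hprodR : (0:ℝ) < ∏ l ∈ Finset.range n, (A + B + l) :=
      Finset.prod_pos fun l _ => by positivity
    rw [betaFn_shift hA0 hB0 k (n-k), Nat.add_sub_cancel' hk']
    field_simp
  -- Step C
  have stepC : betaMean A B h = ∫ z in Ioo (0:ℝ) 1, h z * P z := betaMean_eq A B h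
  -- variance integral
  have hg2base : IntegrableOn (fun z : ℝ => z^((A+1)-1)*(1-z)^((B+1)-1)) (Ioo 0 1) volume :=
    integrableOn_beta_integrand hA1 hB1
  have eptw : ∀ z ∈ Ioo (0:ℝ) 1, (1/betaFn A B) * (z^((A+1)-1)*(1-z)^((B+1)-1))
      = (z*(1-z)) * P z := by
    intro z hz
    have h1 : (0:ℝ) < z := hz.1
    have h2 : (0:ℝ) < 1 - z := by linarith [hz.2]
    rw [show (A+1)-1 = 1 + (A-1) by ring, show (B+1)-1 = 1 + (B-1) by ring,
      Real.rpow_add h1, Real.rpow_add h2, Real.rpow_one, Real.rpow_one, hPdef]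
    field_simp
  have hvar_int : IntegrableOn (fun z : ℝ => (z*(1-z)) * P z) (Ioo 0 1) volume :=
    (show IntegrableOn _ (Ioo (0:ℝ) 1) volume from
      hg2base.const_mul (1/betaFn A B)).congr_fun eptw measurableSet_Ioo
  have hvar : ∫ z in Ioo (0:ℝ) 1, (z*(1-z)) * P z = A*B/((A+B)*(A+B+1)) := by
    rw [← setIntegral_congr_fun measurableSet_Ioo eptw, MeasureTheory.integral_const_mul,
      ← betaFn_eq_setIntegral, betaFn_one_one hA0 hB0]
    field_simp
  -- continuity
  have hTc : Continuous T := by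
    rw [hTdef]
    refine continuous_finset_sum _ fun k _ => ?_
    fun_prop
  have hhc : ContinuousOn h (Icc (0:ℝ) 1) := hC1.continuousOn
  have hPc : ContinuousOn P (Ioo (0:ℝ) 1) := by
    rw [hPdef]
    refine ContinuousOn.div_const (ContinuousOn.mul ?_ ?_) _
    · exact continuousOn_id.rpow_const fun x hx => Or.inl hx.1.ne'
    · exact (continuous_const.sub continuous_id).continuousOn.rpow_const
        fun x hx => Or.inl (by intro hzero; simp only [Pi.sub_apply, id] at hzero; linarith [hx.2])
  -- bound on |T - h|
  have hbound : ∀ z ∈ Ioo (0:ℝ) 1, |T z - h z| ≤ (L₂:ℝ)/(2*n) * (z*(1-z)) := by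
    intro z hz
    rw [hTdef]
    exact bernstein_bound hC1 hL₂ hn (Ioo_subset_Icc_self hz)
  have hg2 : IntegrableOn (fun z : ℝ => (L₂:ℝ)/(2*n) * ((z*(1-z)) * P z)) (Ioo 0 1) volume :=
    hvar_int.const_mul _
  have hptbd : ∀ z ∈ Ioo (0:ℝ) 1,
      ‖(T z - h z) * P z‖ ≤ (L₂:ℝ)/(2*n) * ((z*(1-z)) * P z) := by
    intro z hz
    rw [Real.norm_eq_abs, abs_mul, abs_of_nonneg (hPnn z hz), ← mul_assoc]
    exact mul_le_mul_of_nonneg_right (hbound z hz) (hPnn z hz)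
  have hdiff_int : IntegrableOn (fun z => (T z - h z) * P z) (Ioo (0:ℝ) 1) volume := by
    refine Integrable.mono hg2 ?_ ?_
    · exact (((hTc.continuousOn.sub (hhc.mono Ioo_subset_Icc_self)).mul hPc)).aestronglyMeasurable
        measurableSet_Ioo
    · rw [ae_restrict_iff' measurableSet_Ioo]
      refine ae_of_all _ fun z hz => ?_
      refine (hptbd z hz).trans ?_
      rw [Real.norm_eq_abs]
      exact le_abs_self _
  have hTP_int : IntegrableOn (fun z => T z * P z) (Ioo (0:ℝ) 1) volume := by
    have base : IntegrableOn (fun z => ∑ k ∈ Finset.range (n+1),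
        h ((k:ℝ)/n) * (((n.choose k : ℝ) * z^k * (1-z)^(n-k)) * P z)) (Ioo (0:ℝ) 1) volume :=
      MeasureTheory.integrable_finset_sum _
        (fun k _ => (integrableOn_bkp hA0 hB0 n k).const_mul _)
    refine base.congr_fun (fun z hz => ?_) measurableSet_Ioo
    rw [hTdef]
    simp only [Finset.sum_mul]
    exact Finset.sum_congr rfl fun k _ => by ring
  have hhP_int : IntegrableOn (fun z => h z * P z) (Ioo (0:ℝ) 1) volume := by
    refine (show IntegrableOn _ (Ioo (0:ℝ) 1) volume from hTP_int.sub hdiff_int).congr_fun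
      (fun z hz => ?_) measurableSet_Ioo
    simp only [Pi.sub_apply]
    ring
  -- key estimate
  have key : |(∫ z in Ioo (0:ℝ) 1, T z * P z) - ∫ z in Ioo (0:ℝ) 1, h z * P z|
      ≤ (L₂:ℝ)/(2*n) * (A*B/((A+B)*(A+B+1))) := by
    rw [← MeasureTheory.integral_sub hTP_int hhP_int]
    have e : ∀ z : ℝ, T z * P z - h z * P z = (T z - h z) * P z := fun z => by ring
    simp_rw [e]
    rw [← Real.norm_eq_abs]
    calc ‖∫ z in Ioo (0:ℝ) 1, (T z - h z) * P z‖
        ≤ ∫ z in Ioo (0:ℝ) 1, ‖(T z - h z) * P z‖ := norm_integral_le_integral_norm _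
      _ ≤ ∫ z in Ioo (0:ℝ) 1, (L₂:ℝ)/(2*n) * ((z*(1-z)) * P z) :=
          setIntegral_mono_on hdiff_int.norm hg2 measurableSet_Ioo hptbd
      _ = (L₂:ℝ)/(2*n) * (A*B/((A+B)*(A+B+1))) := by
          rw [MeasureTheory.integral_const_mul, hvar]
  -- final arithmetic
  have hM0 : 0 ≤ 1 + (A+B-1)/n := M_nonneg hA0 hB0 hn
  have hfc := final_const hA0 hB0 hn
  have step2 : (L₂:ℝ)/(2*n) * (A*B/((A+B)*(A+B+1)))
      ≤ Cst (A+1) (B+1) / (6*n) * L₂ * (1 + (A+B-1)/n) := by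
    have e1 : (L₂:ℝ)/(2*n) * (A*B/((A+B)*(A+B+1)))
        = (L₂:ℝ)/(6*n) * (3 * (A*B/((A+B)*(A+B+1)))) := by
      field_simp
      ring
    have e2 : (L₂:ℝ)/(6*n) * (Cst (A+1) (B+1) * (1 + (A+B-1)/n))
        = Cst (A+1) (B+1) / (6*n) * L₂ * (1 + (A+B-1)/n) := by
      field_simp
    rw [e1, ← e2]
    exact mul_le_mul_of_nonneg_left hfc (by positivity)
  have hL₁0 : 0 ≤ L₁ := le_trans (abs_nonneg _) (hL₁ 0 ⟨le_rfl, zero_le_one⟩)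
  have t1 : 0 ≤ Cst A B / n * L₁ *
      (A * B / (A + B) + (A + B) * Cst (A + 1) (B + 1) / 6 * (1 + (A + B - 1) / n)) := by
    refine mul_nonneg (mul_nonneg (div_nonneg (Cst_nonneg hA0 hB0) hnR.le) hL₁0) ?_
    refine add_nonneg (div_nonneg (mul_nonneg hA0.le hB0.le) (by linarith)) ?_
    exact mul_nonneg (div_nonneg (mul_nonneg (by linarith) (Cst_nonneg hA1 hB1)) (by norm_num))
      hM0
  calc |∫ ω, h (W ω) ∂μ - betaMean A B h|
      = |(∫ z in Ioo (0:ℝ) 1, T z * P z) - ∫ z in Ioo (0:ℝ) 1, h z * P z| := by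
        rw [stepA, stepB, stepC]
    _ ≤ (L₂:ℝ)/(2*n) * (A*B/((A+B)*(A+B+1))) := key
    _ ≤ Cst (A+1) (B+1) / (6*n) * L₂ * (1 + (A+B-1)/n) := step2
    _ ≤ _ := le_add_of_nonneg_left t1
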